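/- Let $\bar\rho \in C^1([0,L])$ with $\bar\rho(z) > 0$ and $\bar\rho'(z) \le 0$ for all $z \in [0,L]$. Suppose $k \in \mathbb{R}$, $s \in \mathbb{C} \setminus \{0\}$, and $u \in C^2([0,L], \mathbb{C})$ is not identically zero, satisfies $u(0) = u(L) = 0$, and solves $-(\bar\rho u')' + k^2 \bar\rho u - (k^2 g / s^2) \bar\rho' u = 0$ on $[0,L]$, where $g > 0$. Then $s$ is purely imaginary (i.e. $\mathrm{Re}(s) = 0$). -/

import Mathlib

open Set

theorem rayleigh_taylor_spectral_stability
    (L : ℝ) (hL : 0 < L) (ρ : ℝ → ℝ) (hρ : ContDiff ℝ 1 ρ)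
    (hρpos : ∀ z ∈ Icc (0:ℝ) L, 0 < ρ z)
    (hρ' : ∀ z ∈ Icc (0:ℝ) L, deriv ρ z ≤ 0)
    (k g : ℝ) (hg : 0 < g) (s : ℂ) (hs : s ≠ 0)
    (u : ℝ → ℂ) (hu : ContDiff ℝ 2 u)
    (hne : ∃ z ∈ Icc (0:ℝ) L, u z ≠ 0)
    (hbc0 : u 0 = 0) (hbcL : u L = 0)
    (heq : ∀ z ∈ Icc (0:ℝ) L,
      -(deriv (fun w => (ρ w : ℂ) * deriv u w) z)
        + (k^2 : ℂ) * (ρ z : ℂ) * u z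
        - ((k^2 * g : ℝ) : ℂ) / s^2 * ((deriv ρ z : ℝ) : ℂ) * u z = 0) :
    s.re = 0 := by
  have hL' : (0:ℝ) ≤ L := hL.le
  have hu_d : Differentiable ℝ u := hu.differentiable (by norm_num)
  have hu'_cd : ContDiff ℝ 1 (deriv u) := by
    have h2 : ContDiff ℝ ((1:ℕ) + 1 : ℕ) u := by exact_mod_cast hu
    exact (contDiff_succ_iff_deriv.mp h2).2.2
  have hu'_cont : Continuous (deriv u) := hu'_cd.continuous
  have hρ_d : Differentiable ℝ ρ := hρ.differentiable (by norm_num)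
  have hρ'_cont : Continuous (deriv ρ) := (contDiff_one_iff_deriv.mp hρ).2
  set v : ℝ → ℂ := fun w => (ρ w : ℂ) * deriv u w with hv_def
  have hv_cd : ContDiff ℝ 1 v := (Complex.ofRealCLM.contDiff.comp hρ).mul hu'_cd
  have hv_d : Differentiable ℝ v := hv_cd.differentiable (by norm_num)
  have hv'_cont : Continuous (deriv v) := (contDiff_one_iff_deriv.mp hv_cd).2
  set c : ℂ := ((k^2 * g : ℝ) : ℂ) / s^2 with hc_def
  set A : ℝ := ∫ z in (0:ℝ)..L, ρ z * ‖deriv u z‖^2 with hA_def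
  set B : ℝ := ∫ z in (0:ℝ)..L, ρ z * ‖u z‖^2 with hB_def
  set C : ℝ := ∫ z in (0:ℝ)..L, deriv ρ z * ‖u z‖^2 with hC_def
  have key : ∀ w : ℂ, (starRingEnd ℂ) w * w = ((‖w‖^2 : ℝ) : ℂ) := fun w => by
    rw [← Complex.normSq_eq_conj_mul_self]
    norm_cast
    rw [Complex.normSq_eq_norm_sq]
  -- integration by parts
  have ibp := intervalIntegral.integral_mul_deriv_eq_deriv_mul
    (a := 0) (b := L)
    (u := fun z => (starRingEnd ℂ) (u z)) (u' := fun z => (starRingEnd ℂ) (deriv u z))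
    (v := v) (v' := fun z => deriv v z)
    (fun x _ => ((hu_d x).hasDerivAt).star)
    (fun x _ => (hv_d x).hasDerivAt)
    ((Complex.continuous_conj.comp hu'_cont).intervalIntegrable 0 L)
    (hv'_cont.intervalIntegrable 0 L)
  simp only [hbc0, hbcL, map_zero, zero_mul, sub_zero, zero_sub] at ibp
  have E2 : ∫ z in (0:ℝ)..L, (starRingEnd ℂ) (deriv u z) * v z = ((A : ℝ) : ℂ) := by
    rw [hA_def, ← intervalIntegral.integral_ofReal]
    apply intervalIntegral.integral_congr
    intro z _
    show (starRingEnd ℂ) (deriv u z) * ((ρ z : ℂ) * deriv u z) = _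
    rw [show (starRingEnd ℂ) (deriv u z) * ((ρ z : ℂ) * deriv u z)
        = (ρ z : ℂ) * ((starRingEnd ℂ) (deriv u z) * deriv u z) by ring, key]
    push_cast
    ring
  have E1 : ∫ z in (0:ℝ)..L, (starRingEnd ℂ) (u z) * deriv v z
      = ((k^2 * B : ℝ) : ℂ) - c * ((C : ℝ) : ℂ) := by
    have hcongr : EqOn (fun z => (starRingEnd ℂ) (u z) * deriv v z)
        (fun z => ((k^2 * (ρ z * ‖u z‖^2) : ℝ) : ℂ)
          - c * ((deriv ρ z * ‖u z‖^2 : ℝ) : ℂ)) (uIcc (0:ℝ) L) := by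
      intro z hz
      rw [uIcc_of_le hL'] at hz
      have h0 := heq z hz
      have hdv : deriv v z = (k^2 : ℂ) * (ρ z : ℂ) * u z - c * ((deriv ρ z : ℝ) : ℂ) * u z := by
        linear_combination -h0
      show (starRingEnd ℂ) (u z) * deriv v z = _
      rw [hdv]
      rw [show (starRingEnd ℂ) (u z) * ((k^2 : ℂ) * (ρ z : ℂ) * u z
            - c * ((deriv ρ z : ℝ) : ℂ) * u z)
          = (k^2 : ℂ) * (ρ z : ℂ) * ((starRingEnd ℂ) (u z) * u z)
            - c * ((deriv ρ z : ℝ) : ℂ) * ((starRingEnd ℂ) (u z) * u z) by ring, key]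
      push_cast
      ring
    rw [intervalIntegral.integral_congr hcongr]
    have hi1 : IntervalIntegrable (fun z => ((k^2 * (ρ z * ‖u z‖^2) : ℝ) : ℂ)) MeasureTheory.volume 0 L :=
      (Complex.continuous_ofReal.comp (continuous_const.mul
        (hρ.continuous.mul ((hu.continuous.norm).pow 2)))).intervalIntegrable 0 L
    have hi2 : IntervalIntegrable (fun z => c * ((deriv ρ z * ‖u z‖^2 : ℝ) : ℂ)) MeasureTheory.volume 0 L :=
      (continuous_const.mul (Complex.continuous_ofReal.comp
        (hρ'_cont.mul ((hu.continuous.norm).pow 2)))).intervalIntegrable 0 L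
    rw [intervalIntegral.integral_sub hi1 hi2, intervalIntegral.integral_const_mul,
      intervalIntegral.integral_ofReal, intervalIntegral.integral_ofReal]
    rw [hB_def, hC_def, ← intervalIntegral.integral_const_mul]
  -- main identity
  have main : ((A : ℝ) : ℂ) + ((k^2 * B : ℝ) : ℂ) = c * ((C : ℝ) : ℂ) := by
    rw [E1, E2] at ibp
    linear_combination ibp
  -- nonnegativity
  have hA0 : 0 ≤ A := intervalIntegral.integral_nonneg hL'
    (fun x hx => mul_nonneg (hρpos x hx).le (sq_nonneg _))
  have hB0 : 0 ≤ B := intervalIntegral.integral_nonneg hL'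
    (fun x hx => mul_nonneg (hρpos x hx).le (sq_nonneg _))
  have hC0 : C ≤ 0 := by
    have h1 : 0 ≤ ∫ z in (0:ℝ)..L, -(deriv ρ z * ‖u z‖^2) :=
      intervalIntegral.integral_nonneg hL'
        (fun x hx => neg_nonneg.mpr (mul_nonpos_of_nonpos_of_nonneg (hρ' x hx) (sq_nonneg _)))
    rw [intervalIntegral.integral_neg] at h1
    rw [hC_def]
    linarith
  -- positivity of A + k^2 B
  have hPpos : 0 < A + k^2 * B := by
    rcases (add_nonneg hA0 (mul_nonneg (sq_nonneg k) hB0)).lt_or_eq with h | h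
    · exact h
    have hAzero : A = 0 := by nlinarith [mul_nonneg (sq_nonneg k) hB0]
    exfalso
    have hf_cont : Continuous (fun z => ρ z * ‖deriv u z‖^2) :=
      hρ.continuous.mul ((hu'_cont.norm).pow 2)
    have hnn : 0 ≤ᵐ[MeasureTheory.volume.restrict (Ioc (0:ℝ) L)]
        (fun z => ρ z * ‖deriv u z‖^2) := by
      filter_upwards [MeasureTheory.ae_restrict_mem measurableSet_Ioc] with x hx
      exact mul_nonneg (hρpos x (Ioc_subset_Icc_self hx)).le (sq_nonneg _)
    have hae := (intervalIntegral.integral_eq_zero_iff_of_le_of_nonneg_ae hL' hnn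
      (hf_cont.intervalIntegrable 0 L)).mp (by rw [← hA_def]; exact hAzero)
    have heqOn : EqOn (fun z => ρ z * ‖deriv u z‖^2) 0 (Ioc (0:ℝ) L) :=
      MeasureTheory.Measure.eqOn_Ioc_of_ae_eq (μ := MeasureTheory.volume) hae hf_cont.continuousOn continuousOn_const
    have hderiv0 : ∀ z ∈ Ioc (0:ℝ) L, deriv u z = 0 := by
      intro z hz
      have h1 := heqOn hz
      simp only [Pi.zero_apply] at h1
      have hρz := hρpos z (Ioc_subset_Icc_self hz)
      have : ‖deriv u z‖^2 = 0 := by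
        by_contra hcon
        exact hcon (by nlinarith [sq_nonneg ‖deriv u z‖])
      rw [pow_eq_zero_iff (by norm_num), norm_eq_zero] at this
      exact this
    have hu0 : ∀ x ∈ Icc (0:ℝ) L, u x = 0 := by
      intro x hx
      have hftc : ∫ z in (0:ℝ)..x, deriv u z = u x - u 0 :=
        intervalIntegral.integral_deriv_eq_sub (fun t _ => hu_d t)
          (hu'_cont.intervalIntegrable 0 x)
      have hzero : ∫ z in (0:ℝ)..x, deriv u z = 0 := by
        rw [intervalIntegral.integral_of_le hx.1]
        apply MeasureTheory.integral_eq_zero_of_ae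
        filter_upwards [MeasureTheory.ae_restrict_mem measurableSet_Ioc] with t ht
        exact hderiv0 t ⟨ht.1, ht.2.trans hx.2⟩
      rw [hzero, hbc0, sub_zero] at hftc
      exact hftc.symm
    obtain ⟨z0, hz0, hz0ne⟩ := hne
    exact hz0ne (hu0 z0 hz0)
  -- conclusion
  have hs2ne : s^2 ≠ 0 := pow_ne_zero _ hs
  have hPne : ((A + k^2 * B : ℝ) : ℂ) ≠ 0 := by
    exact_mod_cast Complex.ofReal_ne_zero.mpr (ne_of_gt hPpos)
  have hs2 : s^2 = ((k^2 * g * C / (A + k^2 * B) : ℝ) : ℂ) := by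
    have main2 : (((A : ℝ) : ℂ) + ((k^2 * B : ℝ) : ℂ)) * s^2 = ((k^2 * g : ℝ) : ℂ) * ((C : ℝ) : ℂ) := by
      rw [main, hc_def]
      field_simp
    rw [Complex.ofReal_div, eq_div_iff hPne]
    push_cast at main2 ⊢
    linear_combination main2
  set r : ℝ := k^2 * g * C / (A + k^2 * B) with hr_def
  have hr_le : r ≤ 0 := div_nonpos_of_nonpos_of_nonneg
    (mul_nonpos_of_nonneg_of_nonpos (mul_nonneg (sq_nonneg k) hg.le) hC0) hPpos.le
  have hr_ne : r ≠ 0 := by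
    intro h0
    rw [h0] at hs2
    simp at hs2
    exact hs2ne (by simpa using hs2)
  have hr_neg : r < 0 := lt_of_le_of_ne hr_le hr_ne
  have him : (s^2).im = 0 := by rw [hs2]; simp
  have hre : (s^2).re = r := by rw [hs2]; simp
  rw [sq, Complex.mul_im] at him
  rw [sq, Complex.mul_re] at hre
  by_contra hcon
  have him' : s.im = 0 := by
    rcases mul_eq_zero.mp (by linarith : s.re * s.im = 0) with h | h
    · exact absurd h hcon
    · exact h
  rw [him'] at hre
  nlinarith [sq_nonneg s.re]
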